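/- In the linear order Φ(S), for each α ∈ S, the set of elements lying in blocks τ_β with β < α (together with the initial 1 + η part) has a least upper bound in Φ(S), namely the first element of the block τ_α = 1 + η. -/
import Mathlib


open Set

noncomputable section

/-- The first uncountable ordinal. -/
def omegaOne : Ordinal := (Cardinal.aleph 1).ord

/-- A set of ordinals is closed: it contains the supremum of every
nonempty bounded subset of itself. -/
def OClosed (C : Set Ordinal) : Prop :=
  ∀ X ⊆ C, X.Nonempty → BddAbove X → sSup X ∈ C

/-- A club subset of `ω₁`: closed and unbounded in `ω₁`. -/
def Club' (C : Set Ordinal) : Prop :=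
  OClosed C ∧ C ⊆ Set.Iio omegaOne ∧ ∀ α < omegaOne, ∃ β ∈ C, α < β

open Classical in
/-- The block `τ_α`: `1 + η` if `α ∈ S` and `η` otherwise. -/
def tau (S : Set Ordinal) (α : Ordinal) : Type :=
  if α ∈ S then Unit ⊕ₗ ℚ else ℚ

instance (S : Set Ordinal) (α : Ordinal) : LinearOrder (tau S α) := by
  unfold tau; split <;> infer_instance

/-- `Φ(S) = 1 + η + Σ_{α<ω₁} τ_α`, realized as a lexicographically
ordered sum. -/
def Phi (S : Set Ordinal) : Type 1 :=
  (ULift.{1} (Unit ⊕ₗ ℚ)) ⊕ₗ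
    (Lex (Sigma (fun α : {β : Ordinal // β < omegaOne} => tau S α.1)))

instance (S : Set Ordinal) : LinearOrder (Phi S) := by
  unfold Phi; infer_instance

/-- The elements of `Φ(S)` lying in the initial `1 + η` part or in a block
`τ_β` with `β < α`. -/
def below (S : Set Ordinal) (α : Ordinal) : Set (Phi S) :=
  {x | Sum.elim (fun _ => True) (fun p => ((ofLex p).1).1 < α) (ofLex x)}

/-- The elements of `Φ(S)` lying in the block `τ_α`. -/
def inBlock (S : Set Ordinal) (α : Ordinal) : Set (Phi S) :=
  {x | ∃ p, ofLex x = Sum.inr p ∧ ((ofLex p).1).1 = α}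

lemma sumlex_no_max : ∀ t : Unit ⊕ₗ ℚ, ∃ t', t < t' := by
  intro t
  rcases h' : ofLex t with u | q
  · exact ⟨toLex (Sum.inr 0), by
      rw [show t = toLex (Sum.inl u) by rw [← h']; rfl]
      exact Sum.Lex.sep u 0⟩
  · exact ⟨toLex (Sum.inr (q+1)), by
      rw [show t = toLex (Sum.inr q) by rw [← h']; rfl]
      exact Sum.Lex.inr (lt_add_one q)⟩

def tau0 (S : Set Ordinal) (α : Ordinal) (d : Decidable (α ∈ S)) : Type :=
  @ite _ (α ∈ S) d (Unit ⊕ₗ ℚ) ℚ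

instance inst0 (S : Set Ordinal) (α : Ordinal) (d : Decidable (α ∈ S)) :
    LinearOrder (tau0 S α d) := by
  unfold tau0; split <;> infer_instance

lemma tau0_no_max (S : Set Ordinal) (α : Ordinal) (d : Decidable (α ∈ S)) :
    ∀ t : tau0 S α d, ∃ t', t < t' := by
  cases d with
  | isTrue h => exact sumlex_no_max
  | isFalse h =>
    show ∀ t : ℚ, ∃ t', t < t'
    exact fun t => ⟨t+1, lt_add_one t⟩

lemma tau_no_max (S : Set Ordinal) (α : Ordinal) : ∀ t : tau S α, ∃ t', t < t' :=
  tau0_no_max S α _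

lemma tau0_bot (S : Set Ordinal) (α : Ordinal) (d : Decidable (α ∈ S)) (h : α ∈ S) :
    ∃ e : tau0 S α d, ∀ t, e ≤ t := by
  cases d with
  | isTrue h' =>
    refine ⟨show Unit ⊕ₗ ℚ from toLex (Sum.inl ()), ?_⟩
    show ∀ t : (Unit ⊕ₗ ℚ), toLex (Sum.inl ()) ≤ t
    intro t
    rcases h'' : ofLex t with u | q
    · rw [show t = toLex (Sum.inl u) by rw [← h'']; rfl]
    · rw [show t = toLex (Sum.inr q) by rw [← h'']; rfl]
      exact le_of_lt (Sum.Lex.sep () q)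
  | isFalse h' => exact absurd h h'

lemma tau_bot (S : Set Ordinal) (α : Ordinal) (h : α ∈ S) :
    ∃ e : tau S α, ∀ t, e ≤ t :=
  tau0_bot S α _ h

theorem stmt15 (S : Set Ordinal) (hS : S ⊆ Set.Iio omegaOne)
    (α : Ordinal) (hα : α < omegaOne) (hαS : α ∈ S) :
    ∃ m ∈ inBlock S α, IsLUB (below S α) m ∧ ∀ y ∈ inBlock S α, m ≤ y := by
  obtain ⟨e, he⟩ := tau_bot S α hαS
  set pm : Lex (Sigma (fun β : {β : Ordinal // β < omegaOne} => tau S β.1)) :=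
    toLex ⟨⟨α, hα⟩, e⟩ with hpm
  refine ⟨toLex (Sum.inr pm), ⟨pm, rfl, rfl⟩, ⟨?_, ?_⟩, ?_⟩
  · -- upper bound
    rintro x hx
    rcases hx' : ofLex x with a | p
    · rw [show x = toLex (Sum.inl a) by rw [← hx']; rfl]
      exact le_of_lt (Sum.Lex.sep a pm)
    · rw [show x = toLex (Sum.inr p) by rw [← hx']; rfl]
      have hp : ((ofLex p).1).1 < α := by
        have := hx; unfold below at this
        simpa [hx'] using this
      refine Sum.Lex.toLex_le_toLex.mpr (Sum.Lex.inr ?_)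
      exact Sigma.Lex.le_def.mpr (Or.inl (Subtype.mk_lt_mk.mpr hp))
  · -- least
    rintro b hb
    by_contra hcon
    have hlt : b < toLex (Sum.inr pm) := lt_of_not_ge hcon
    rcases hb' : ofLex b with a | p
    · obtain ⟨t', ht'⟩ := sumlex_no_max a.down
      have hmem : toLex (Sum.inl (ULift.up t')) ∈ below S α := trivial
      have := hb hmem
      rw [show b = toLex (Sum.inl a) by rw [← hb']; rfl] at this
      have : ULift.up t' ≤ a := Sum.Lex.inl_le_inl_iff.mp this
      exact absurd ht' (not_lt.mpr this)
    · rw [show b = toLex (Sum.inr p) by rw [← hb']; rfl] at hlt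
      have hplt : p < pm := Sum.Lex.inr_lt_inr_iff.mp hlt
      obtain ⟨i, t⟩ := p
      rcases Sigma.Lex.lt_def.mp hplt with h1 | ⟨h1, h2⟩
    -- h1 : p.1 < pm.1
      · obtain ⟨t', ht'⟩ := tau_no_max S i.1 t
        have hmem : toLex (Sum.inr (toLex ⟨i, t'⟩)) ∈ below S α := by
          show i.1 < α
          exact Subtype.mk_lt_mk.mp h1
        have hle := hb hmem
        rw [show b = toLex (Sum.inr (toLex ⟨i, t⟩)) from
          (toLex_ofLex b).symm.trans (congrArg toLex hb')] at hle
        have : (toLex ⟨i, t'⟩ : Lex (Sigma fun β : {β : Ordinal // β < omegaOne} => tau S β.1))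
            ≤ toLex ⟨i, t⟩ := Sum.Lex.inr_le_inr_iff.mp hle
        rcases Sigma.Lex.le_def.mp this with h3 | ⟨h3, h4⟩
        · exact absurd h3 (lt_irrefl _)
        · exact absurd ht' (not_lt.mpr h4)
      · cases h1
        exact absurd h2 (not_lt.mpr (he t))
  · -- minimal in block
    rintro y ⟨p, hy, hyα⟩
    rw [show y = toLex (Sum.inr p) by rw [← hy]; rfl]
    refine Sum.Lex.toLex_le_toLex.mpr (Sum.Lex.inr ?_)
    obtain ⟨i, t⟩ := p
    have hi : i = ⟨α, hα⟩ := Subtype.ext hyα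
    cases hi
    exact Sigma.Lex.le_def.mpr (Or.inr ⟨rfl, he t⟩)
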